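/- Let $0 < H < 1/2$ and let $\ell(y) = (f^{-1})'(y)$ for $y < 0$, where $f^{-1}$ is the inverse of the restriction of $f(s) = \frac{1}{\Gamma(H+1/2)}[(1-s)_+^{H-1/2} - (-s)_+^{H-1/2}]$ to $(-\infty,0)$. Then $\ell(y) \sim -\hat{c}_H\, (-y)^{-(5-2H)/(3-2H)}$ as $y \to 0^-$, where $\hat{c}_H = \frac{2}{3-2H}\left(\frac{1-2H}{2\Gamma(H+1/2)}\right)^{2/(3-2H)}$. -/

import Mathlib

open Filter Real Topology


lemma core_limit {e : ℝ} (he : e < 0) :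
    Tendsto (fun u : ℝ => (u ^ e - (1+u) ^ e) / (-e * u ^ (e - 1))) atTop (𝓝 1) := by
  have he' : e ≠ 0 := ne_of_lt he
  have hderiv : HasDerivAt (fun x : ℝ => (1 + x) ^ e) e 0 := by
    have h2 : HasDerivAt (fun x : ℝ => 1 + x) 1 0 := by
      simpa using (hasDerivAt_id (0:ℝ)).const_add 1
    have h1 : HasDerivAt (fun x : ℝ => x ^ e) (e * (1:ℝ) ^ (e - 1)) ((1:ℝ) + 0) := by
      norm_num
      simpa using Real.hasDerivAt_rpow_const (p := e) (Or.inl one_ne_zero)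
    have h3 := h1.comp 0 h2
    simpa [Function.comp_def] using h3
  have hslope := hasDerivAt_iff_tendsto_slope.mp hderiv
  have hslope1 : Tendsto (fun x : ℝ => ((1 + x) ^ e - 1) / (e * x)) (𝓝[≠] (0:ℝ)) (𝓝 1) := by
    have h4 := hslope.div_const e
    rw [div_self he'] at h4
    refine h4.congr' ?_
    filter_upwards [self_mem_nhdsWithin] with x hx
    simp only [slope_def_field]
    rw [div_div]
    congr 1
    · simp
    · ring
  have hinv : Tendsto (fun u : ℝ => 1/u) atTop (𝓝[≠] (0:ℝ)) := by
    refine tendsto_nhdsWithin_of_tendsto_nhds_of_eventually_within _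
      (by simpa [one_div] using tendsto_inv_atTop_zero (𝕜 := ℝ)) ?_
    filter_upwards [eventually_gt_atTop (0:ℝ)] with u hu
    simp [ne_of_gt hu]
  have hcomp := hslope1.comp hinv
  refine hcomp.congr' ?_
  filter_upwards [eventually_gt_atTop (0:ℝ)] with u hu
  have hu' : u ≠ 0 := ne_of_gt hu
  have h1u : (0:ℝ) < 1 + u := by linarith
  have key : (1+u) ^ e = u ^ e * (1 + 1/u) ^ e := by
    rw [← Real.mul_rpow (le_of_lt hu) (by positivity)]
    field_simp
    ring
  have key2 : u ^ (e-1) = u ^ e / u := by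
    rw [Real.rpow_sub hu, Real.rpow_one]
  have hue : u ^ e ≠ 0 := ne_of_gt (Real.rpow_pos_of_pos hu e)
  simp only [Function.comp_apply]
  rw [key, key2]
  field_simp
  ring
noncomputable def mvnKernel1 (H s : ℝ) : ℝ :=
  (1 / Real.Gamma (H + 1/2)) *
    ((max (1 - s) 0) ^ (H - 1/2) - (max (-s) 0) ^ (H - 1/2))
lemma mvn_eq (H : ℝ) {s : ℝ} (hs : s < 0) :
    mvnKernel1 H s = (1 / Real.Gamma (H + 1/2)) *
      ((1 - s) ^ (H - 1/2) - (-s) ^ (H - 1/2)) := by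
  unfold mvnKernel1
  rw [max_eq_left (by linarith), max_eq_left (by linarith)]

lemma mvn_hasDerivAt (H : ℝ) {s : ℝ} (hs : s < 0) :
    HasDerivAt (mvnKernel1 H)
      ((1 / Real.Gamma (H + 1/2)) * (1/2 - H) *
        ((1 - s) ^ (H - 3/2) - (-s) ^ (H - 3/2))) s := by
  have h1s : (0:ℝ) < 1 - s := by linarith
  have hns : (0:ℝ) < -s := by linarith
  have h1 : HasDerivAt (fun s : ℝ => (1 - s) ^ (H - 1/2))
      ((-1) * (H - 1/2) * (1 - s) ^ (H - 1/2 - 1)) s := by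
    have hlin : HasDerivAt (fun s : ℝ => 1 - s) (-1) s := by
      simpa using ((hasDerivAt_id s).const_sub 1)
    exact hlin.rpow_const (Or.inl (ne_of_gt h1s))
  have h2 : HasDerivAt (fun s : ℝ => (-s) ^ (H - 1/2))
      ((-1) * (H - 1/2) * (-s) ^ (H - 1/2 - 1)) s := by
    have hlin : HasDerivAt (fun s : ℝ => -s) (-1) s := (hasDerivAt_id s).neg
    exact hlin.rpow_const (Or.inl (ne_of_gt hns))
  have h3 := ((h1.sub h2).const_mul (1 / Real.Gamma (H + 1/2)))
  have heq : (fun s : ℝ => (1 / Real.Gamma (H + 1/2)) *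
      ((1 - s) ^ (H - 1/2) - (-s) ^ (H - 1/2))) =ᶠ[𝓝 s] mvnKernel1 H := by
    filter_upwards [Iio_mem_nhds hs] with t ht
    exact (mvn_eq H ht).symm
  have h4 := h3.congr_of_eventuallyEq heq.symm
  refine h4.congr_deriv ?_
  have : H - 1/2 - 1 = H - 3/2 := by ring
  rw [this]
  ring
lemma arith_aux (q G Q' X Y T : ℝ) (hq : q ≠ 0) (hG : G ≠ 0) (hQ' : Q' ≠ 0)
    (hY : Y ≠ 0) (hT : T ≠ 0) :
    (-(q * (Y * (T/2 * Q'))))⁻¹ / (-(2/T * G) * (q * G * (Q' * X))⁻¹) = X / Y := by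
  field_simp

lemma G_limit (H : ℝ) (hH0 : 0 < H) (hH1 : H < 1/2) :
    Tendsto (fun u : ℝ =>
      ((1 / Real.Gamma (H + 1/2)) * (1/2 - H) * ((1+u) ^ (H - 3/2) - u ^ (H - 3/2)))⁻¹ /
        (-((2 / (3 - 2*H)) * ((1 - 2*H) / (2 * Real.Gamma (H + 1/2))) ^ (2 / (3 - 2*H))) *
          (-((1 / Real.Gamma (H + 1/2)) * ((1+u) ^ (H - 1/2) - u ^ (H - 1/2)))) ^
            (-(5 - 2*H) / (3 - 2*H)))) atTop (𝓝 1) := by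
  have hΓ : 0 < Real.Gamma (H + 1/2) := Real.Gamma_pos_of_pos (by linarith)
  set c : ℝ := 1 / Real.Gamma (H + 1/2) with hc_def
  have hc : 0 < c := by positivity
  set q : ℝ := c * (1/2 - H) with hq_def
  have hq : 0 < q := by
    have : (0:ℝ) < 1/2 - H := by linarith
    positivity
  have h32 : (0:ℝ) < 3 - 2*H := by linarith
  set p : ℝ := (5 - 2*H) / (3 - 2*H) with hp_def
  set E : ℝ := 2 / (3 - 2*H) with hE_def
  have hqE : (1 - 2*H) / (2 * Real.Gamma (H + 1/2)) = q := by
    rw [hq_def, hc_def]; field_simp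
  rw [hqE]
  have hp1 : p = 1 + E := by rw [hp_def, hE_def]; field_simp; ring
  -- the two core ratios
  have ha : H - 1/2 < 0 := by linarith
  have hb : H - 3/2 < 0 := by linarith
  set A : ℝ → ℝ := fun u => u ^ (H - 1/2) - (1+u) ^ (H - 1/2) with hA_def
  set B : ℝ → ℝ := fun u => u ^ (H - 3/2) - (1+u) ^ (H - 3/2) with hB_def
  set r₁ : ℝ → ℝ := fun u => A u / (-(H - 1/2) * u ^ (H - 1/2 - 1)) with hr₁_def
  set r₂ : ℝ → ℝ := fun u => B u / (-(H - 3/2) * u ^ (H - 3/2 - 1)) with hr₂_def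
  have hlim₁ : Tendsto r₁ atTop (𝓝 1) := core_limit ha
  have hlim₂ : Tendsto r₂ atTop (𝓝 1) := core_limit hb
  have hlim : Tendsto (fun u => (r₁ u) ^ p / r₂ u) atTop (𝓝 1) := by
    have h1 : Tendsto (fun u => (r₁ u) ^ p) atTop (𝓝 1) := by
      have := hlim₁.rpow_const (p := p) (Or.inl one_ne_zero)
      simpa using this
    have h2 := h1.div hlim₂ one_ne_zero
    rw [div_one] at h2
    exact h2
  refine hlim.congr' ?_
  filter_upwards [eventually_gt_atTop (0:ℝ)] with u hu
  have h1u : (0:ℝ) < 1 + u := by linarith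
  have hA : 0 < A u := by
    have := Real.rpow_lt_rpow_of_neg hu (by linarith : u < 1 + u) ha
    simpa [hA_def] using sub_pos.mpr this
  have hB : 0 < B u := by
    have := Real.rpow_lt_rpow_of_neg hu (by linarith : u < 1 + u) hb
    simpa [hB_def] using sub_pos.mpr this
  have hP : 0 < u ^ (H - 1/2 - 1) := Real.rpow_pos_of_pos hu _
  have hQ : 0 < u ^ (H - 3/2 - 1) := Real.rpow_pos_of_pos hu _
  have hr₁ : 0 < r₁ u := by
    rw [hr₁_def]
    exact div_pos hA (mul_pos (by linarith) hP)
  have hr₂ : 0 < r₂ u := by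
    rw [hr₂_def]
    exact div_pos hB (mul_pos (by linarith) hQ)
  -- rewrite the numerator-side factor
  have hfs : -(c * ((1+u) ^ (H - 1/2) - u ^ (H - 1/2))) = c * A u := by
    rw [hA_def]; ring
  have hDs : c * (1/2 - H) * ((1+u) ^ (H - 3/2) - u ^ (H - 3/2)) = -(q * B u) := by
    rw [hB_def, hq_def]; ring
  rw [hfs, hDs]
  have hD₁ : -(H - 1/2) * u ^ (H - 1/2 - 1) ≠ 0 :=
    ne_of_gt (mul_pos (by linarith) hP)
  have hD₂ : -(H - 3/2) * u ^ (H - 3/2 - 1) ≠ 0 :=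
    ne_of_gt (mul_pos (by linarith) hQ)
  have hAeq : A u = r₁ u * (-(H - 1/2) * u ^ (H - 1/2 - 1)) := by
    rw [hr₁_def]; exact (div_mul_cancel₀ _ hD₁).symm
  have hBeq : B u = r₂ u * (-(H - 3/2) * u ^ (H - 3/2 - 1)) := by
    rw [hr₂_def]; exact (div_mul_cancel₀ _ hD₂).symm
  have hcA : c * A u = q * (u ^ (H - 1/2 - 1) * r₁ u) := by
    rw [hAeq, hq_def]; ring
  have hexp : -(5 - 2*H) / (3 - 2*H) = -p := by rw [hp_def]; ring
  have hpow : (c * A u) ^ (-p) = (q ^ p * (u ^ (H - 3/2 - 1) * (r₁ u) ^ p))⁻¹ := by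
    rw [Real.rpow_neg (by positivity), hcA]
    congr 1
    rw [Real.mul_rpow hq.le (by positivity), Real.mul_rpow hP.le hr₁.le,
      ← Real.rpow_mul hu.le]
    congr 2
    congr 1
    rw [hp_def, mul_div_assoc', div_eq_iff (ne_of_gt h32)]
    ring
  have hqp : q ^ p = q * q ^ E := by
    rw [hp1, Real.rpow_add hq, Real.rpow_one]
  rw [hexp, hpow, hqp, hBeq]
  have hqEpos : 0 < q ^ E := Real.rpow_pos_of_pos hq _
  have hr₁p : (0:ℝ) < (r₁ u) ^ p := Real.rpow_pos_of_pos hr₁ _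
  have hneg : -(H - 3/2) = (3 - 2*H)/2 := by ring
  rw [hneg, hE_def]
  exact (arith_aux q (q ^ (2/(3-2*H))) (u ^ (H - 3/2 - 1)) ((r₁ u) ^ p) (r₂ u) (3 - 2*H)
    (ne_of_gt hq) (ne_of_gt (Real.rpow_pos_of_pos hq _)) (ne_of_gt hQ)
    (ne_of_gt hr₂) (ne_of_gt h32)).symm

/-- For `0 < H < 1/2`, if `finv` is the inverse of the restriction of the kernel
`f` to `(-∞,0)` and `ℓ(y) = (f⁻¹)'(y)` for `y < 0`, then
`ℓ(y) ∼ -ĉ_H (-y)^{-(5-2H)/(3-2H)}` as `y → 0⁻`, where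
`ĉ_H = (2/(3-2H)) ((1-2H)/(2Γ(H+1/2)))^{2/(3-2H)}`. -/
theorem ell_asymp_zero_left (H : ℝ) (hH0 : 0 < H) (hH1 : H < 1/2)
    (finv ell : ℝ → ℝ)
    (hleft : ∀ s < (0:ℝ), finv (mvnKernel1 H s) = s)
    (hright : ∀ y < (0:ℝ), mvnKernel1 H (finv y) = y)
    (hder : ∀ y < (0:ℝ), HasDerivAt finv (ell y) y) :
    Tendsto (fun y : ℝ =>
        ell y / (-((2 / (3 - 2*H)) *
            ((1 - 2*H) / (2 * Real.Gamma (H + 1/2))) ^ (2 / (3 - 2*H))) *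
          (-y) ^ (-(5 - 2*H) / (3 - 2*H))))
      (nhdsWithin 0 (Set.Iio 0)) (nhds 1) := by
  have hΓ : 0 < Real.Gamma (H + 1/2) := Real.Gamma_pos_of_pos (by linarith)
  have hc : 0 < 1 / Real.Gamma (H + 1/2) := by positivity
  have ha : H - 1/2 < 0 := by linarith
  have hb : H - 3/2 < 0 := by linarith
  -- f is negative on (-∞, 0)
  have hf_neg : ∀ s < (0:ℝ), mvnKernel1 H s < 0 := by
    intro s hs
    rw [mvn_eq H hs]
    have h1 := Real.rpow_lt_rpow_of_neg (by linarith : (0:ℝ) < -s)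
      (by linarith : -s < 1 - s) ha
    have : (1 - s) ^ (H - 1/2) - (-s) ^ (H - 1/2) < 0 := by linarith
    exact mul_neg_of_pos_of_neg hc this
  -- the derivative is negative on (-∞, 0)
  have hD_neg : ∀ s < (0:ℝ),
      (1 / Real.Gamma (H + 1/2)) * (1/2 - H) *
        ((1 - s) ^ (H - 3/2) - (-s) ^ (H - 3/2)) < 0 := by
    intro s hs
    have h1 := Real.rpow_lt_rpow_of_neg (by linarith : (0:ℝ) < -s)
      (by linarith : -s < 1 - s) hb
    have h2 : (1 - s) ^ (H - 3/2) - (-s) ^ (H - 3/2) < 0 := by linarith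
    have h3 : 0 < (1 / Real.Gamma (H + 1/2)) * (1/2 - H) :=
      mul_pos hc (by linarith)
    exact mul_neg_of_pos_of_neg h3 h2
  -- f is strictly antitone on (-∞, 0)
  have hf_anti : StrictAntiOn (mvnKernel1 H) (Set.Iio 0) := by
    apply strictAntiOn_of_deriv_neg (convex_Iio 0)
    · intro x hx
      exact ((mvn_hasDerivAt H hx).continuousAt).continuousWithinAt
    · intro x hx
      rw [interior_Iio] at hx
      rw [(mvn_hasDerivAt H hx).deriv]
      exact hD_neg x hx
  -- finv y < 0 for y < 0
  have hfinv_neg : ∀ y < (0:ℝ), finv y < 0 := by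
    intro y hy
    by_contra hcon
    push_neg at hcon
    have h0 : 0 ≤ mvnKernel1 H (finv y) := by
      unfold mvnKernel1
      have hm : max (-finv y) 0 = 0 := max_eq_right (by linarith)
      rw [hm, Real.zero_rpow (ne_of_lt ha), sub_zero]
      positivity
    rw [hright y hy] at h0
    linarith
  -- formula for ell
  have hell : ∀ y < (0:ℝ), ell y =
      ((1 / Real.Gamma (H + 1/2)) * (1/2 - H) *
        ((1 - finv y) ^ (H - 3/2) - (-finv y) ^ (H - 3/2)))⁻¹ := by
    intro y hy
    have hs : finv y < 0 := hfinv_neg y hy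
    have hfd := mvn_hasDerivAt H hs
    have hfinvd : HasDerivAt finv (ell y) (mvnKernel1 H (finv y)) := by
      rw [hright y hy]; exact hder y hy
    have hcomp := hfinvd.comp (finv y) hfd
    have hid : HasDerivAt (finv ∘ mvnKernel1 H) 1 (finv y) := by
      have heq : (finv ∘ mvnKernel1 H) =ᶠ[nhds (finv y)] id := by
        filter_upwards [Iio_mem_nhds hs] with t ht
        exact hleft t ht
      exact (hasDerivAt_id (finv y)).congr_of_eventuallyEq heq
    have huniq := hcomp.unique hid
    have hDne : (1 / Real.Gamma (H + 1/2)) * (1/2 - H) *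
        ((1 - finv y) ^ (H - 3/2) - (-finv y) ^ (H - 3/2)) ≠ 0 :=
      ne_of_lt (hD_neg (finv y) hs)
    exact eq_inv_of_mul_eq_one_left huniq
  -- finv tends to -∞
  have hfinv_tendsto : Tendsto finv (nhdsWithin 0 (Set.Iio 0)) atBot := by
    rw [tendsto_atBot]
    intro b
    set M := min b (-1) with hM_def
    have hM0 : M < 0 := lt_of_le_of_lt (min_le_right _ _) (by norm_num)
    have hfM : mvnKernel1 H M < 0 := hf_neg M hM0
    have hmem : Set.Ioo (mvnKernel1 H M) 0 ∈ nhdsWithin (0:ℝ) (Set.Iio 0) :=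
      Ioo_mem_nhdsLT_of_mem ⟨hfM, le_refl _⟩
    filter_upwards [hmem] with y hy
    have hy0 : y < 0 := hy.2
    have h1 : finv y < 0 := hfinv_neg y hy0
    have h2 : finv y < M := by
      by_contra hcon
      push_neg at hcon
      rcases eq_or_lt_of_le hcon with heq | hlt
      · have hcontra := hy.1
        rw [heq, hright y hy0] at hcontra
        exact absurd hcontra (lt_irrefl y)
      · have := hf_anti hM0 h1 hlt
        rw [hright y hy0] at this
        exact absurd hy.1 (not_lt.mpr (le_of_lt this))
    calc finv y ≤ M := le_of_lt h2
      _ ≤ b := min_le_left _ _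
  -- compose
  have hneg_tendsto : Tendsto (fun y => -(finv y)) (nhdsWithin 0 (Set.Iio 0)) atTop :=
    tendsto_neg_atBot_atTop.comp hfinv_tendsto
  have hkey := (G_limit H hH0 hH1).comp hneg_tendsto
  refine hkey.congr' ?_
  filter_upwards [self_mem_nhdsWithin] with y hy
  have hy0 : y < 0 := hy
  have hs : finv y < 0 := hfinv_neg y hy0
  simp only [Function.comp_apply]
  rw [hell y hy0]
  have h1 : 1 + -(finv y) = 1 - finv y := by ring
  rw [h1]
  congr 2
  rw [← mvn_eq H hs, hright y hy0]
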